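/- For any n×n real matrices A and P and any integer t ≥ 2, A^t − P^t = (A − P)^t + Σ_{c=0}^{t−1} Σ_{b=1}^{t−c−1} A^{t−c−b−1} (A − P) P^b (A − P)^c + Σ_{b'=1}^{t−1} P^{t−b'} (A − P)^{b'}. -/

import Mathlib

open Finset

private lemma tele {R : Type*} [Ring R] (A P : R) (m : ℕ) :
    A ^ m - P ^ m = ∑ k ∈ range m, A ^ (m - 1 - k) * (A - P) * P ^ k := by
  induction m with
  | zero => simp
  | succ m ih =>
    rw [Finset.sum_range_succ]
    have h : ∀ k ∈ range m, A ^ (m + 1 - 1 - k) * (A - P) * P ^ k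
        = A * (A ^ (m - 1 - k) * (A - P) * P ^ k) := by
      intro k hk
      rw [mem_range] at hk
      rw [show m + 1 - 1 - k = (m - 1 - k) + 1 by omega, pow_succ']
      noncomm_ring
    rw [Finset.sum_congr rfl h, ← Finset.mul_sum, ← ih,
      show m + 1 - 1 - m = 0 by omega, pow_zero, one_mul, pow_succ', pow_succ']
    noncomm_ring

private lemma split_head {M : Type*} [AddCommMonoid M] (m : ℕ) (hm : 1 ≤ m) (f : ℕ → M) :
    ∑ k ∈ range m, f k = f 0 + ∑ k ∈ Finset.Icc 1 (m - 1), f k := by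
  have h1 : Finset.Icc 1 (m - 1) = Finset.Ico 1 m := by
    rw [← Finset.Ico_add_one_right_eq_Icc]; congr 1; omega
  rw [h1, Finset.range_eq_Ico, Finset.sum_eq_sum_Ico_succ_bot hm]

/-- For arbitrary square matrices `A, P` and `t ≥ 2`:
`A^t − P^t = (A−P)^t + Σ_{c=0}^{t−1} Σ_{b=1}^{t−c−1} A^{t−c−b−1}(A−P)P^b(A−P)^c
  + Σ_{b'=1}^{t−1} P^{t−b'}(A−P)^{b'}`. -/
theorem stmt5 (n : ℕ) (A P : Matrix (Fin n) (Fin n) ℝ) (t : ℕ) (ht : 2 ≤ t) :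
    A ^ t - P ^ t =
      (A - P) ^ t
      + ∑ c ∈ Finset.range t, ∑ b ∈ Finset.Icc 1 (t - c - 1),
          A ^ (t - c - b - 1) * (A - P) * P ^ b * (A - P) ^ c
      + ∑ b' ∈ Finset.Icc 1 (t - 1), P ^ (t - b') * (A - P) ^ b' := by
  have key : ∀ c ∈ range t,
      ∑ b ∈ Finset.Icc 1 (t - c - 1),
          A ^ (t - c - b - 1) * (A - P) * P ^ b * (A - P) ^ c
      = (A ^ (t - c) * (A - P) ^ c - A ^ (t - c - 1) * (A - P) ^ (c + 1))
        - P ^ (t - c) * (A - P) ^ c := by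
    intro c hc
    rw [mem_range] at hc
    have hm : 1 ≤ t - c := by omega
    have hsum : ∑ b ∈ range (t - c),
        A ^ (t - c - b - 1) * (A - P) * P ^ b * (A - P) ^ c
        = (A ^ (t - c) - P ^ (t - c)) * (A - P) ^ c := by
      rw [tele A P (t - c), Finset.sum_mul]
      apply Finset.sum_congr rfl
      intro b hb
      rw [show t - c - b - 1 = t - c - 1 - b by omega]
    rw [split_head (t - c) hm] at hsum
    have h0 : A ^ (t - c - 0 - 1) * (A - P) * P ^ 0 * (A - P) ^ c
        = A ^ (t - c - 1) * (A - P) ^ (c + 1) := by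
      simp [pow_succ', mul_assoc]
    rw [h0, sub_mul] at hsum
    rw [eq_sub_of_add_eq' hsum]
    abel
  rw [Finset.sum_congr rfl key, Finset.sum_sub_distrib]
  have htel : ∑ c ∈ range t,
      (A ^ (t - c) * (A - P) ^ c - A ^ (t - c - 1) * (A - P) ^ (c + 1))
      = A ^ t - (A - P) ^ t := by
    have h := Finset.sum_range_sub' (fun c => A ^ (t - c) * (A - P) ^ c) t
    simp only [show ∀ c : ℕ, t - (c + 1) = t - c - 1 from fun c => by omega] at h
    rw [h]
    simp
  rw [htel]
  have hP : ∑ c ∈ range t, P ^ (t - c) * (A - P) ^ c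
      = P ^ t + ∑ c ∈ Finset.Icc 1 (t - 1), P ^ (t - c) * (A - P) ^ c := by
    rw [split_head t (by omega) (fun c => P ^ (t - c) * (A - P) ^ c)]
    simp
  rw [hP]
  abel
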